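/- arXiv:2102.08363 — 10 statements merged into one kernel-verified Lean document; each statement's English description precedes it below -/
import Mathlib

section
/- (Interpolation Lemma, part 1: nonnegativity of the COMBO penalty.) Fix f ∈ [0,1] and assume d_f(x) > 0 for every x ∈ ι. Then ν(ρ, f) = Σ_x ρ(x)·(ρ(x) − d(x))/d_f(x) ≥ 0. -/
theorem combo_penalty_nonneg {ι : Type*} [Fintype ι] [Nonempty ι]
    (ρ d : ι → ℝ) (hρ0 : ∀ x, 0 ≤ ρ x) (hd0 : ∀ x, 0 ≤ d x)
    (hρ1 : ∑ x, ρ x = 1) (hd1 : ∑ x, d x = 1)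
    (f : ℝ) (hf0 : 0 ≤ f) (hf1 : f ≤ 1)
    (hdf : ∀ x, 0 < f * d x + (1 - f) * ρ x) :
    0 ≤ ∑ x, ρ x * (ρ x - d x) / (f * d x + (1 - f) * ρ x) := by
  have key : ∀ x, ρ x - d x ≤ ρ x * (ρ x - d x) / (f * d x + (1 - f) * ρ x) := by
    intro x
    have h := hdf x
    rw [le_div_iff₀ h]
    nlinarith [mul_nonneg hf0 (sq_nonneg (ρ x - d x))]
  calc (0:ℝ) = ∑ x, (ρ x - d x) := by rw [Finset.sum_sub_distrib, hρ1, hd1]; ring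
    _ ≤ _ := Finset.sum_le_sum fun x _ => key x
end

section
/- (Interpolation Lemma, part 2: monotonicity in f.) Assume ρ(x) > 0 and d(x) > 0 for every x ∈ ι. Then the function f ↦ ν(ρ, f) is monotone nondecreasing on [0,1]: for all 0 ≤ f₁ ≤ f₂ ≤ 1, ν(ρ, f₁) ≤ ν(ρ, f₂). -/
theorem combo_penalty_monotone {ι : Type*} [Fintype ι] [Nonempty ι]
    (ρ d : ι → ℝ) (hρ0 : ∀ x, 0 < ρ x) (hd0 : ∀ x, 0 < d x)
    (hρ1 : ∑ x, ρ x = 1) (hd1 : ∑ x, d x = 1)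
    (f₁ f₂ : ℝ) (hf₁0 : 0 ≤ f₁) (hf₁₂ : f₁ ≤ f₂) (hf₂1 : f₂ ≤ 1) :
    ∑ x, ρ x * (ρ x - d x) / (f₁ * d x + (1 - f₁) * ρ x) ≤
      ∑ x, ρ x * (ρ x - d x) / (f₂ * d x + (1 - f₂) * ρ x) := by
  apply Finset.sum_le_sum
  intro x _
  have hρ := hρ0 x
  have hd := hd0 x
  have hpos : ∀ f : ℝ, 0 ≤ f → f ≤ 1 → 0 < f * d x + (1 - f) * ρ x := by
    intro f h0 h1
    rcases le_total (d x) (ρ x) with h | h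
    · nlinarith [mul_nonneg (sub_nonneg.2 h1) (sub_nonneg.2 h)]
    · nlinarith [mul_nonneg h0 (sub_nonneg.2 h)]
  have hb₁ := hpos f₁ hf₁0 (le_trans hf₁₂ hf₂1)
  have hb₂ := hpos f₂ (le_trans hf₁0 hf₁₂) hf₂1
  rw [div_le_div_iff₀ hb₁ hb₂]
  nlinarith [sq_nonneg (ρ x - d x), mul_nonneg (mul_nonneg hρ.le (sub_nonneg.2 hf₁₂)) (sq_nonneg (ρ x - d x))]
end

section
/- (Strict monotonicity of the penalty, from the proof of the Interpolation Lemma.) Assume ρ(x) > 0 and d(x) > 0 for every x ∈ ι, and assume ρ ≠ d. Then the function f ↦ ν(ρ, f) is strictly increasing on [0,1]: for all 0 ≤ f₁ < f₂ ≤ 1, ν(ρ, f₁) < ν(ρ, f₂). -/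
theorem combo_penalty_strictMono {ι : Type*} [Fintype ι] [Nonempty ι]
    (ρ d : ι → ℝ) (hρ0 : ∀ x, 0 < ρ x) (hd0 : ∀ x, 0 < d x)
    (hρ1 : ∑ x, ρ x = 1) (hd1 : ∑ x, d x = 1)
    (hne : ρ ≠ d)
    (f₁ f₂ : ℝ) (hf₁0 : 0 ≤ f₁) (hf₁₂ : f₁ < f₂) (hf₂1 : f₂ ≤ 1) :
    ∑ x, ρ x * (ρ x - d x) / (f₁ * d x + (1 - f₁) * ρ x) <
      ∑ x, ρ x * (ρ x - d x) / (f₂ * d x + (1 - f₂) * ρ x) := by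
  have hD : ∀ (f : ℝ), 0 ≤ f → f ≤ 1 → ∀ x, 0 < f * d x + (1 - f) * ρ x := by
    intro f h0 h1 x
    rcases eq_or_lt_of_le h0 with h | h
    · have : (1 - f) * ρ x > 0 := by
        apply mul_pos; linarith; exact hρ0 x
      nlinarith [hd0 x]
    · have h1' : 0 ≤ (1 - f) * ρ x := mul_nonneg (by linarith) (hρ0 x).le
      nlinarith [mul_pos h (hd0 x)]
  have hD1 := hD f₁ hf₁0 (by linarith)
  have hD2 := hD f₂ (by linarith) hf₂1
  obtain ⟨y, hy⟩ : ∃ y, ρ y ≠ d y := by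
    by_contra h
    push_neg at h
    exact hne (funext h)
  apply Finset.sum_lt_sum
  · intro x _
    rw [div_le_div_iff₀ (hD1 x) (hD2 x)]
    nlinarith [mul_nonneg (mul_nonneg (hρ0 x).le (sq_nonneg (ρ x - d x)))
      (sub_nonneg.2 hf₁₂.le)]
  · refine ⟨y, Finset.mem_univ y, ?_⟩
    rw [div_lt_div_iff₀ (hD1 y) (hD2 y)]
    have h1 : 0 < (ρ y - d y) ^ 2 := by have := sub_ne_zero.2 hy; positivity
    nlinarith [mul_pos (mul_pos (hρ0 y) h1) (sub_pos.2 hf₁₂)]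
end

section
/- (Interpolation Lemma, part 3: characterization of the zero penalty.) Assume ρ(x) > 0 and d(x) > 0 for every x ∈ ι, and fix f ∈ [0,1]. Then ν(ρ, f) = 0 if and only if f = 0 or ρ = d (i.e., ρ(x) = d(x) for all x). -/
theorem combo_penalty_eq_zero_iff {ι : Type*} [Fintype ι] [Nonempty ι]
    (ρ d : ι → ℝ) (hρ0 : ∀ x, 0 < ρ x) (hd0 : ∀ x, 0 < d x)
    (hρ1 : ∑ x, ρ x = 1) (hd1 : ∑ x, d x = 1)
    (f : ℝ) (hf0 : 0 ≤ f) (hf1 : f ≤ 1) :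
    (∑ x, ρ x * (ρ x - d x) / (f * d x + (1 - f) * ρ x)) = 0 ↔ (f = 0 ∨ ρ = d) := by
  have hD : ∀ x, 0 < f * d x + (1 - f) * ρ x := by
    intro x
    rcases eq_or_lt_of_le hf0 with h | h
    · have : f * d x + (1 - f) * ρ x = ρ x := by rw [← h]; ring
      rw [this]; exact hρ0 x
    · have h1 : 0 < f * d x := mul_pos h (hd0 x)
      have h2 : 0 ≤ (1 - f) * ρ x := mul_nonneg (by linarith) (hρ0 x).le
      linarith
  constructor
  · intro h
    by_cases hf : f = 0
    · exact Or.inl hf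
    · right
      have key : ∀ x, (ρ x - (f * d x + (1 - f) * ρ x))^2 / (f * d x + (1 - f) * ρ x)
          = f * (ρ x * (ρ x - d x) / (f * d x + (1 - f) * ρ x)) - f * (ρ x - d x) := by
        intro x
        have hDx := (hD x).ne'
        rw [eq_sub_iff_add_eq, mul_div_assoc', div_add' _ _ _ hDx, div_left_inj' hDx]
        ring
      have hsum : ∑ x, (ρ x - (f * d x + (1 - f) * ρ x))^2 / (f * d x + (1 - f) * ρ x) = 0 := by
        rw [Finset.sum_congr rfl (fun x _ => key x), Finset.sum_sub_distrib,
          ← Finset.mul_sum, h, ← Finset.mul_sum, Finset.sum_sub_distrib, hρ1, hd1]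
        ring
      have hzero : ∀ x ∈ Finset.univ, (ρ x - (f * d x + (1 - f) * ρ x))^2 / (f * d x + (1 - f) * ρ x) = 0 := by
        apply (Finset.sum_eq_zero_iff_of_nonneg ?_).mp hsum
        intro x _
        exact div_nonneg (sq_nonneg _) (hD x).le
      funext x
      have hx := hzero x (Finset.mem_univ x)
      have h3 : ρ x - (f * d x + (1 - f) * ρ x) = 0 := by
        have := (hD x).ne'
        rcases div_eq_zero_iff.mp hx with h | h
        · exact (pow_eq_zero_iff two_ne_zero).mp h
        · exact absurd h this
      have h4 : f * (ρ x - d x) = 0 := by linarith [h3]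
      rcases mul_eq_zero.mp h4 with h5 | h5
      · exact absurd h5 hf
      · linarith
  · rintro (hf | hρd)
    · subst hf
      have : ∀ x, ρ x * (ρ x - d x) / (0 * d x + (1 - 0) * ρ x) = ρ x - d x := by
        intro x
        have := (hρ0 x).ne'
        rw [zero_mul, sub_zero, one_mul, zero_add]
        exact mul_div_cancel_left₀ _ this
      rw [Finset.sum_congr rfl (fun x _ => this x), Finset.sum_sub_distrib, hρ1, hd1]
      ring
    · subst hρd
      simp
end

section
/- (Remark A.1: the expected COMBO penalty under the dataset distribution is nonpositive.) Fix f ∈ [0,1] and assume d_f(x) > 0 for every x ∈ ι. Then ν̃ := Σ_x d(x)·(ρ(x) − d(x))/d_f(x) ≤ 0; moreover, if ρ ≠ d and f < 1, then ν̃ < 0. (Hence, unlike CQL, COMBO in expectation pushes Q-values up rather than down on dataset state-action tuples.) -/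
theorem combo_dataset_penalty_nonpos {ι : Type*} [Fintype ι] [Nonempty ι]
    (ρ d : ι → ℝ) (hρ0 : ∀ x, 0 ≤ ρ x) (hd0 : ∀ x, 0 ≤ d x)
    (hρ1 : ∑ x, ρ x = 1) (hd1 : ∑ x, d x = 1)
    (f : ℝ) (hf0 : 0 ≤ f) (hf1 : f ≤ 1)
    (hdf : ∀ x, 0 < f * d x + (1 - f) * ρ x) :
    (∑ x, d x * (ρ x - d x) / (f * d x + (1 - f) * ρ x)) ≤ 0 ∧
    (ρ ≠ d → f < 1 → (∑ x, d x * (ρ x - d x) / (f * d x + (1 - f) * ρ x)) < 0) := by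
  by_cases hf : f = 1
  · subst hf
    have hd : ∀ x, 0 < d x := by
      intro x; have := hdf x; simpa using this
    constructor
    · have heq : (∑ x, d x * (ρ x - d x) / (1 * d x + (1 - 1) * ρ x))
          = ∑ x, (ρ x - d x) := by
        apply Finset.sum_congr rfl; intro x _
        have := (hd x).ne'
        simp only [sub_self, zero_mul, add_zero, one_mul]; exact mul_div_cancel_left₀ _ this
      rw [heq, Finset.sum_sub_distrib, hρ1, hd1]; norm_num
    · intro _ h; exact absurd h (lt_irrefl 1)
  · have hflt : f < 1 := lt_of_le_of_ne hf1 hf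
    have hc : (0:ℝ) < 1 - f := by linarith
    have key : ∀ x, d x * (ρ x - d x) / (f * d x + (1 - f) * ρ x)
        = (1 - f)⁻¹ * ((f * d x + (1 - f) * ρ x) - d x)
          - (1 - f)⁻¹ * ((f * d x + (1 - f) * ρ x) - d x)^2
              / (f * d x + (1 - f) * ρ x) := by
      intro x
      have h1 : f * d x + (1 - f) * ρ x ≠ 0 := (hdf x).ne'
      have h2 : (1 - f) ≠ 0 := hc.ne'
      rw [div_eq_iff h1, sub_mul, mul_div_assoc, mul_assoc ((1 - f)⁻¹) ((f * d x + (1 - f) * ρ x - d x) ^ 2 / (f * d x + (1 - f) * ρ x)), div_mul_cancel₀ _ h1]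
      have h3 : (1 - f)⁻¹ * (1 - f) = 1 := inv_mul_cancel₀ h2
      linear_combination (-(d x * (ρ x - d x))) * h3
    have hsum0 : ∑ x, ((f * d x + (1 - f) * ρ x) - d x) = 0 := by
      rw [Finset.sum_sub_distrib, Finset.sum_add_distrib, ← Finset.mul_sum,
        ← Finset.mul_sum, hρ1, hd1]
      ring
    have hrw : (∑ x, d x * (ρ x - d x) / (f * d x + (1 - f) * ρ x))
        = - (1 - f)⁻¹ * ∑ x, ((f * d x + (1 - f) * ρ x) - d x)^2
            / (f * d x + (1 - f) * ρ x) := by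
      rw [Finset.sum_congr rfl (fun x _ => key x), Finset.sum_sub_distrib]
      simp only [mul_div_assoc]
      rw [← Finset.mul_sum, ← Finset.mul_sum, hsum0]
      ring
    have hterm : ∀ x, 0 ≤ ((f * d x + (1 - f) * ρ x) - d x)^2
        / (f * d x + (1 - f) * ρ x) := fun x =>
      div_nonneg (sq_nonneg _) (hdf x).le
    constructor
    · rw [hrw]
      have : 0 ≤ ∑ x, ((f * d x + (1 - f) * ρ x) - d x)^2
          / (f * d x + (1 - f) * ρ x) :=
        Finset.sum_nonneg (fun x _ => hterm x)
      nlinarith [inv_pos.mpr hc]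
    · intro hne _
      obtain ⟨y, hy⟩ : ∃ y, ρ y ≠ d y := by
        by_contra h
        push_neg at h
        exact hne (funext h)
      have hypos : 0 < ((f * d y + (1 - f) * ρ y) - d y)^2
          / (f * d y + (1 - f) * ρ y) := by
        apply div_pos _ (hdf y)
        have : (f * d y + (1 - f) * ρ y) - d y = (1 - f) * (ρ y - d y) := by ring
        rw [this]
        have h1 : (1 - f) * (ρ y - d y) ≠ 0 :=
          mul_ne_zero hc.ne' (sub_ne_zero.mpr hy)
        positivity
      have hsum : 0 < ∑ x, ((f * d x + (1 - f) * ρ x) - d x)^2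
          / (f * d x + (1 - f) * ρ x) :=
        Finset.sum_pos' (fun x _ => hterm x) ⟨y, Finset.mem_univ y, hypos⟩
      rw [hrw]
      nlinarith [inv_pos.mpr hc]
end

section
/- (Total-variation bound on return differences between two dynamics.) Let X be a finite nonempty type, γ ∈ [0,1), P₁, P₂ : X → X → ℝ row-stochastic matrices, R_max ≥ 0, r : X → ℝ with |r(x)| ≤ R_max for all x, and μ : X → ℝ a probability mass function. Let D := (1/2)·max_x Σ_y |P₁(x,y) − P₂(x,y)|. Then |Σ_x μ(x)·(S_{P₁}·r)(x) − Σ_x μ(x)·(S_{P₂}·r)(x)| ≤ 2·γ·R_max·D/(1−γ)². -/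
open Matrix
set_option linter.unusedSectionVars false
set_option maxHeartbeats 1000000
section helpers
variable {X : Type*} [Fintype X] [Nonempty X] [DecidableEq X]

lemma rowL1_mulVec_bound (P : Matrix X X ℝ) (C : ℝ)
    (hC : ∀ x, ∑ y, |P x y| ≤ C) (v : X → ℝ) : ‖P *ᵥ v‖ ≤ C * ‖v‖ := by
  have hC0 : 0 ≤ C := le_trans (Finset.sum_nonneg fun y _ => abs_nonneg _) (hC (Classical.arbitrary X))
  rw [pi_norm_le_iff_of_nonneg (by positivity)]
  intro x
  calc ‖(P *ᵥ v) x‖ = |∑ y, P x y * v y| := rfl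
    _ ≤ ∑ y, |P x y * v y| := Finset.abs_sum_le_sum_abs _ _
    _ = ∑ y, |P x y| * |v y| := by simp [abs_mul]
    _ ≤ ∑ y, |P x y| * ‖v‖ := by
        refine Finset.sum_le_sum fun y _ => ?_
        exact mul_le_mul_of_nonneg_left (norm_le_pi_norm v y) (abs_nonneg _)
    _ = (∑ y, |P x y|) * ‖v‖ := by rw [Finset.sum_mul]
    _ ≤ C * ‖v‖ := mul_le_mul_of_nonneg_right (hC x) (norm_nonneg _)

lemma stoch_mulVec_bound (P : Matrix X X ℝ)
    (h0 : ∀ x y, 0 ≤ P x y) (h1 : ∀ x, ∑ y, P x y = 1) (v : X → ℝ) :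
    ‖P *ᵥ v‖ ≤ ‖v‖ := by
  have := rowL1_mulVec_bound P 1 (fun x => by
    rw [← h1 x]; exact le_of_eq (Finset.sum_congr rfl fun y _ => abs_of_nonneg (h0 x y))) v
  simpa using this

lemma key_eq (γ : ℝ) (P : Matrix X X ℝ) (v : X → ℝ) :
    (1 - γ • P) *ᵥ v = v - γ • (P *ᵥ v) := by
  simp [sub_mulVec, smul_mulVec]

lemma isUnit_one_sub_smul (γ : ℝ) (hγ0 : 0 ≤ γ) (hγ1 : γ < 1) (P : Matrix X X ℝ)
    (hb : ∀ v : X → ℝ, ‖P *ᵥ v‖ ≤ ‖v‖) :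
    IsUnit (1 - γ • P) := by
  rw [← Matrix.mulVec_injective_iff_isUnit]
  intro u v huv
  have hv : (1 - γ • P) *ᵥ (u - v) = 0 := by
    rw [mulVec_sub]; exact sub_eq_zero.mpr huv
  rw [key_eq, sub_eq_zero] at hv
  have h1 : ‖u - v‖ ≤ γ * ‖u - v‖ := by
    calc ‖u - v‖ = γ * ‖P *ᵥ (u - v)‖ := by
          nth_rewrite 1 [hv]
          rw [norm_smul, Real.norm_eq_abs, abs_of_nonneg hγ0]
    _ ≤ γ * ‖u - v‖ := mul_le_mul_of_nonneg_left (hb _) hγ0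
  have h2 : ‖u - v‖ = 0 := by nlinarith [norm_nonneg (u - v)]
  exact sub_eq_zero.mp (norm_eq_zero.mp h2)

lemma inv_mulVec_bound (γ : ℝ) (hγ0 : 0 ≤ γ) (hγ1 : γ < 1) (P : Matrix X X ℝ)
    (hb : ∀ v : X → ℝ, ‖P *ᵥ v‖ ≤ ‖v‖) (w : X → ℝ) :
    ‖(1 - γ • P)⁻¹ *ᵥ w‖ ≤ ‖w‖ / (1 - γ) := by
  have hU := isUnit_one_sub_smul γ hγ0 hγ1 P hb
  set v := (1 - γ • P)⁻¹ *ᵥ w with hvdef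
  have hAv : (1 - γ • P) *ᵥ v = w := by
    rw [hvdef, mulVec_mulVec, Matrix.mul_nonsing_inv _ (Matrix.isUnit_iff_isUnit_det _ |>.mp hU), one_mulVec]
  rw [key_eq] at hAv
  have hv : v = w + γ • (P *ᵥ v) := by rw [← hAv]; abel
  have h1 : ‖v‖ ≤ ‖w‖ + γ * ‖v‖ := by
    calc ‖v‖ ≤ ‖w‖ + ‖γ • (P *ᵥ v)‖ := by nth_rewrite 1 [hv]; exact norm_add_le _ _
    _ ≤ ‖w‖ + γ * ‖v‖ := by
        rw [norm_smul, Real.norm_eq_abs, abs_of_nonneg hγ0]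
        exact add_le_add (le_refl _) (mul_le_mul_of_nonneg_left (hb _) hγ0)
  rw [le_div_iff₀ (by linarith)]
  nlinarith [norm_nonneg v]

end helpers

theorem return_difference_tv_bound {X : Type*} [Fintype X] [Nonempty X] [DecidableEq X]
    (γ : ℝ) (hγ0 : 0 ≤ γ) (hγ1 : γ < 1)
    (P₁ P₂ : Matrix X X ℝ)
    (hP₁0 : ∀ x y, 0 ≤ P₁ x y) (hP₁1 : ∀ x, ∑ y, P₁ x y = 1)
    (hP₂0 : ∀ x y, 0 ≤ P₂ x y) (hP₂1 : ∀ x, ∑ y, P₂ x y = 1)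
    (Rmax : ℝ) (hR : 0 ≤ Rmax) (r : X → ℝ) (hr : ∀ x, |r x| ≤ Rmax)
    (μ : X → ℝ) (hμ0 : ∀ x, 0 ≤ μ x) (hμ1 : ∑ x, μ x = 1)
    (D : ℝ)
    (hD : D = (1 / 2) * Finset.univ.sup' Finset.univ_nonempty
      (fun x => ∑ y, |P₁ x y - P₂ x y|)) :
    |(∑ x, μ x * ((1 - γ • P₁)⁻¹ *ᵥ r) x) - ∑ x, μ x * ((1 - γ • P₂)⁻¹ *ᵥ r) x| ≤
      2 * γ * Rmax * D / (1 - γ) ^ 2 := by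
  have hb₁ := stoch_mulVec_bound P₁ hP₁0 hP₁1
  have hb₂ := stoch_mulVec_bound P₂ hP₂0 hP₂1
  have hU₁ := isUnit_one_sub_smul γ hγ0 hγ1 P₁ hb₁
  have hU₂ := isUnit_one_sub_smul γ hγ0 hγ1 P₂ hb₂
  have hd₁ := (Matrix.isUnit_iff_isUnit_det _).mp hU₁
  set S₁ := (1 - γ • P₁)⁻¹
  set S₂ := (1 - γ • P₂)⁻¹
  set v₂ := S₂ *ᵥ r with hv₂
  set d : X → ℝ := S₁ *ᵥ r - S₂ *ᵥ r with hddef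
  -- identity: A₁ *ᵥ d = γ • ((P₁ - P₂) *ᵥ v₂)
  have hA₂v₂ : (1 - γ • P₂) *ᵥ v₂ = r := by
    rw [hv₂, mulVec_mulVec, Matrix.mul_nonsing_inv _ ((Matrix.isUnit_iff_isUnit_det _).mp hU₂), one_mulVec]
  have hA₁S₁ : (1 - γ • P₁) *ᵥ (S₁ *ᵥ r) = r := by
    rw [mulVec_mulVec, Matrix.mul_nonsing_inv _ hd₁, one_mulVec]
  have hident : d = S₁ *ᵥ (γ • ((P₁ - P₂) *ᵥ v₂)) := by
    have h1 : (1 - γ • P₁) *ᵥ d = γ • ((P₁ - P₂) *ᵥ v₂) := by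
      rw [hddef, mulVec_sub, hA₁S₁]
      have : (1 - γ • P₁) *ᵥ v₂ = r - γ • ((P₁ - P₂) *ᵥ v₂) := by
        have : (1 - γ • P₁) = (1 - γ • P₂) - γ • (P₁ - P₂) := by
          rw [smul_sub]; abel
        rw [this, sub_mulVec, hA₂v₂, smul_mulVec]
      rw [this]; abel
    calc d = S₁ *ᵥ ((1 - γ • P₁) *ᵥ d) := by
          rw [mulVec_mulVec, Matrix.nonsing_inv_mul _ hd₁, one_mulVec]
      _ = S₁ *ᵥ (γ • ((P₁ - P₂) *ᵥ v₂)) := by rw [h1]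
  -- norm bounds
  have hrn : ‖r‖ ≤ Rmax := by
    rw [pi_norm_le_iff_of_nonneg hR]; exact hr
  have hv₂n : ‖v₂‖ ≤ Rmax / (1 - γ) :=
    le_trans (inv_mulVec_bound γ hγ0 hγ1 P₂ hb₂ r) (by
      apply div_le_div_of_nonneg_right hrn (by linarith))
  have hdiff : ‖(P₁ - P₂) *ᵥ v₂‖ ≤ (2 * D) * ‖v₂‖ := by
    apply rowL1_mulVec_bound
    intro x
    have : (∑ y, |(P₁ - P₂) x y|) ≤ Finset.univ.sup' Finset.univ_nonempty
        (fun x => ∑ y, |P₁ x y - P₂ x y|) := by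
      simpa only [Matrix.sub_apply] using Finset.le_sup' (fun x => ∑ y, |P₁ x y - P₂ x y|) (Finset.mem_univ x)
    rw [hD]; linarith
  have hD0 : 0 ≤ D := by
    rw [hD]
    have h1 : ∑ y, |P₁ (Classical.arbitrary X) y - P₂ (Classical.arbitrary X) y| ≤
        Finset.univ.sup' Finset.univ_nonempty (fun x => ∑ y, |P₁ x y - P₂ x y|) :=
      Finset.le_sup' (fun x => ∑ y, |P₁ x y - P₂ x y|) (Finset.mem_univ _)
    have h0 : (0:ℝ) ≤ ∑ y, |P₁ (Classical.arbitrary X) y - P₂ (Classical.arbitrary X) y| :=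
      Finset.sum_nonneg fun y _ => abs_nonneg _
    linarith
  have hdn : ‖d‖ ≤ 2 * γ * Rmax * D / (1 - γ) ^ 2 := by
    rw [hident]
    calc ‖S₁ *ᵥ (γ • ((P₁ - P₂) *ᵥ v₂))‖ ≤ ‖γ • ((P₁ - P₂) *ᵥ v₂)‖ / (1 - γ) :=
          inv_mulVec_bound γ hγ0 hγ1 P₁ hb₁ _
      _ = γ * ‖(P₁ - P₂) *ᵥ v₂‖ / (1 - γ) := by
          rw [norm_smul, Real.norm_eq_abs, abs_of_nonneg hγ0]
      _ ≤ γ * ((2 * D) * (Rmax / (1 - γ))) / (1 - γ) := by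
          have h2D : 0 ≤ 2 * D := by linarith
          have : ‖(P₁ - P₂) *ᵥ v₂‖ ≤ (2 * D) * (Rmax / (1 - γ)) :=
            le_trans hdiff (mul_le_mul_of_nonneg_left hv₂n h2D)
          apply div_le_div_of_nonneg_right _ (by linarith)
          exact mul_le_mul_of_nonneg_left this hγ0
      _ = 2 * γ * Rmax * D / (1 - γ) ^ 2 := by
          field_simp
  -- combine
  have hsum : (∑ x, μ x * (S₁ *ᵥ r) x) - ∑ x, μ x * (S₂ *ᵥ r) x = ∑ x, μ x * d x := by
    rw [← Finset.sum_sub_distrib]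
    exact Finset.sum_congr rfl fun x _ => by rw [hddef]; simp [mul_sub]
  rw [hsum]
  calc |∑ x, μ x * d x| ≤ ∑ x, |μ x * d x| := Finset.abs_sum_le_sum_abs _ _
    _ ≤ ∑ x, μ x * ‖d‖ := by
        refine Finset.sum_le_sum fun x _ => ?_
        rw [abs_mul, abs_of_nonneg (hμ0 x)]
        exact mul_le_mul_of_nonneg_left (norm_le_pi_norm d x) (hμ0 x)
    _ = ‖d‖ := by rw [← Finset.sum_mul, hμ1, one_mul]
    _ ≤ 2 * γ * Rmax * D / (1 - γ) ^ 2 := hdn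
end

section
/- (Proposition A.2: asymptotic pointwise lower bound of the COMBO fixed point, matrix form.) Let X be a finite nonempty type, γ ∈ [0,1), and let P, P̄, P̂ : X → X → ℝ be row-stochastic matrices (true, empirical, and model dynamics composed with the policy), r, r̄, r̂ : X → ℝ rewards, f ∈ [0,1], and β ≥ 0. Let ρ, d, d_f : X → ℝ with d_f(x) > 0 for all x, and set c(x) = (ρ(x) − d(x))/d_f(x). Suppose Q̂ : X → ℝ satisfies the COMBO fixed-point equation Q̂(x) = f·(r̄(x) + γ·Σ_y P̄(x,y)·Q̂(y)) + (1−f)·(r̂(x) + γ·Σ_y P̂(x,y)·Q̂(y)) − β·c(x) for all x. Let M := max_x |Q̂(x)|, and define ε̄(x) := |r̄(x) − r(x)| + γ·M·Σ_y |P̄(x,y) − P(x,y)| and ε̂(x) := |r̂(x) − r(x)| + γ·M·Σ_y |P̂(x,y) − P(x,y)|. Then with Q^π := S_P·r, for all x ∈ X: Q̂(x) ≤ Q^π(x) − β·(S_P·c)(x) + f·(S_P·ε̄)(x) + (1−f)·(S_P·ε̂)(x). -/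
open Matrix

lemma combo_aux_mulVec {X : Type*} [Fintype X] [DecidableEq X]
    (γ : ℝ) (P : Matrix X X ℝ) (u : X → ℝ) (x : X) :
    ((1 - γ • P) *ᵥ u) x = u x - γ * ∑ y, P x y * u y := by
  simp only [Matrix.mulVec, dotProduct, Matrix.sub_apply, Matrix.one_apply, Matrix.smul_apply,
    smul_eq_mul, sub_mul, ite_mul, one_mul, zero_mul, mul_assoc, Finset.sum_sub_distrib,
    Finset.sum_ite_eq, Finset.mem_univ, if_true, Finset.mul_sum]

lemma combo_aux_nonneg {X : Type*} [Fintype X] [Nonempty X] [DecidableEq X]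
    (γ : ℝ) (hγ0 : 0 ≤ γ) (hγ1 : γ < 1)
    (P : Matrix X X ℝ) (hP0 : ∀ x y, 0 ≤ P x y) (hP1 : ∀ x, ∑ y, P x y = 1)
    (u : X → ℝ) (h : ∀ x, 0 ≤ ((1 - γ • P) *ᵥ u) x) : ∀ x, 0 ≤ u x := by
  obtain ⟨x₀, -, hmin⟩ := Finset.exists_min_image Finset.univ u Finset.univ_nonempty
  have hmin' : ∀ y, u x₀ ≤ u y := fun y => hmin y (Finset.mem_univ y)
  have h0 := h x₀
  rw [combo_aux_mulVec] at h0
  have hsum : u x₀ ≤ ∑ y, P x₀ y * u y := by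
    calc u x₀ = ∑ y, P x₀ y * u x₀ := by rw [← Finset.sum_mul, hP1, one_mul]
    _ ≤ ∑ y, P x₀ y * u y :=
      Finset.sum_le_sum fun y _ => mul_le_mul_of_nonneg_left (hmin' y) (hP0 x₀ y)
  have h1 : γ * u x₀ ≤ γ * ∑ y, P x₀ y * u y := mul_le_mul_of_nonneg_left hsum hγ0
  have h2 : 0 ≤ (1 - γ) * u x₀ := by nlinarith
  have h3 : 0 ≤ u x₀ := nonneg_of_mul_nonneg_right h2 (by linarith)
  intro x; exact le_trans h3 (hmin' x)

theorem combo_fixed_point_pointwise_lower_bound {X : Type*}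
    [Fintype X] [Nonempty X] [DecidableEq X]
    (γ : ℝ) (hγ0 : 0 ≤ γ) (hγ1 : γ < 1)
    (P Pbar Phat : Matrix X X ℝ)
    (hP0 : ∀ x y, 0 ≤ P x y) (hP1 : ∀ x, ∑ y, P x y = 1)
    (hPbar0 : ∀ x y, 0 ≤ Pbar x y) (hPbar1 : ∀ x, ∑ y, Pbar x y = 1)
    (hPhat0 : ∀ x y, 0 ≤ Phat x y) (hPhat1 : ∀ x, ∑ y, Phat x y = 1)
    (r rbar rhat : X → ℝ)
    (f β : ℝ) (hf0 : 0 ≤ f) (hf1 : f ≤ 1) (hβ : 0 ≤ β)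
    (ρ d df : X → ℝ) (hdf : ∀ x, 0 < df x)
    (c : X → ℝ) (hc : ∀ x, c x = (ρ x - d x) / df x)
    (Qhat : X → ℝ)
    (hfix : ∀ x, Qhat x =
      f * (rbar x + γ * ∑ y, Pbar x y * Qhat y) +
        (1 - f) * (rhat x + γ * ∑ y, Phat x y * Qhat y) - β * c x)
    (M : ℝ) (hM : M = Finset.univ.sup' Finset.univ_nonempty fun x => |Qhat x|)
    (εbar εhat : X → ℝ)
    (hεbar : ∀ x, εbar x = |rbar x - r x| + γ * M * ∑ y, |Pbar x y - P x y|)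
    (hεhat : ∀ x, εhat x = |rhat x - r x| + γ * M * ∑ y, |Phat x y - P x y|) :
    ∀ x, Qhat x ≤ ((1 - γ • P)⁻¹ *ᵥ r) x - β * ((1 - γ • P)⁻¹ *ᵥ c) x +
      f * ((1 - γ • P)⁻¹ *ᵥ εbar) x + (1 - f) * ((1 - γ • P)⁻¹ *ᵥ εhat) x := by
  set A : Matrix X X ℝ := 1 - γ • P with hA
  -- invertibility
  have hdet : A.det ≠ 0 := by
    intro hd
    obtain ⟨v, hv0, hv⟩ := (Matrix.exists_mulVec_eq_zero_iff).2 hd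
    have h1 : ∀ x, 0 ≤ v x := by
      apply combo_aux_nonneg γ hγ0 hγ1 P hP0 hP1
      intro x; rw [← hA, hv]; simp
    have h2 : ∀ x, 0 ≤ (-v) x := by
      apply combo_aux_nonneg γ hγ0 hγ1 P hP0 hP1
      intro x
      have : (1 - γ • P) *ᵥ (-v) = 0 := by rw [Matrix.mulVec_neg, ← hA, hv, neg_zero]
      rw [this]; simp
    exact hv0 (funext fun x => le_antisymm (by simpa using h2 x) (h1 x))
  have hAA : A * A⁻¹ = 1 := Matrix.mul_nonsing_inv A (isUnit_iff_ne_zero.mpr hdet)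
  -- bounds on Qhat
  have hMQ : ∀ y, |Qhat y| ≤ M := fun y => by rw [hM]; exact Finset.le_sup' (fun x => |Qhat x|) (Finset.mem_univ y)
  -- key pointwise inequality
  set v : X → ℝ := fun x => r x - β * c x + f * εbar x + (1 - f) * εhat x with hv
  have key : ∀ x, (A *ᵥ Qhat) x ≤ v x := by
    intro x
    rw [← hA] at *
    rw [combo_aux_mulVec]
    have e1 : γ * ∑ y, (Pbar x y - P x y) * Qhat y ≤ γ * M * ∑ y, |Pbar x y - P x y| := by
      rw [mul_assoc γ M]
      apply mul_le_mul_of_nonneg_left _ hγ0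
      calc ∑ y, (Pbar x y - P x y) * Qhat y ≤ ∑ y, |Pbar x y - P x y| * M := by
            apply Finset.sum_le_sum; intro y _
            calc (Pbar x y - P x y) * Qhat y ≤ |(Pbar x y - P x y) * Qhat y| := le_abs_self _
            _ = |Pbar x y - P x y| * |Qhat y| := abs_mul _ _
            _ ≤ |Pbar x y - P x y| * M :=
                mul_le_mul_of_nonneg_left (hMQ y) (abs_nonneg _)
        _ = M * ∑ y, |Pbar x y - P x y| := by rw [← Finset.sum_mul, mul_comm]
    have e2 : γ * ∑ y, (Phat x y - P x y) * Qhat y ≤ γ * M * ∑ y, |Phat x y - P x y| := by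
      rw [mul_assoc γ M]
      apply mul_le_mul_of_nonneg_left _ hγ0
      calc ∑ y, (Phat x y - P x y) * Qhat y ≤ ∑ y, |Phat x y - P x y| * M := by
            apply Finset.sum_le_sum; intro y _
            calc (Phat x y - P x y) * Qhat y ≤ |(Phat x y - P x y) * Qhat y| := le_abs_self _
            _ = |Phat x y - P x y| * |Qhat y| := abs_mul _ _
            _ ≤ |Phat x y - P x y| * M :=
                mul_le_mul_of_nonneg_left (hMQ y) (abs_nonneg _)
        _ = M * ∑ y, |Phat x y - P x y| := by rw [← Finset.sum_mul, mul_comm]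
    have hs1 : ∑ y, (Pbar x y - P x y) * Qhat y
        = (∑ y, Pbar x y * Qhat y) - ∑ y, P x y * Qhat y := by
      rw [← Finset.sum_sub_distrib]; apply Finset.sum_congr rfl; intro y _; ring
    have hs2 : ∑ y, (Phat x y - P x y) * Qhat y
        = (∑ y, Phat x y * Qhat y) - ∑ y, P x y * Qhat y := by
      rw [← Finset.sum_sub_distrib]; apply Finset.sum_congr rfl; intro y _; ring
    have hbar : rbar x - r x ≤ |rbar x - r x| := le_abs_self _
    have hhat : rhat x - r x ≤ |rhat x - r x| := le_abs_self _
    simp only [hv, hεbar, hεhat]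
    rw [hfix x]
    rw [hs1] at e1; rw [hs2] at e2
    nlinarith [mul_le_mul_of_nonneg_left (add_le_add hbar e1) hf0,
      mul_le_mul_of_nonneg_left (add_le_add hhat e2) (by linarith : (0:ℝ) ≤ 1 - f)]
  -- conclude
  have hQ : ∀ x, Qhat x ≤ (A⁻¹ *ᵥ v) x := by
    have hw := combo_aux_nonneg γ hγ0 hγ1 P hP0 hP1 (A⁻¹ *ᵥ v - Qhat) ?_
    · intro x; have := hw x; simpa [sub_nonneg] using this
    · intro x
      have hAv : A *ᵥ (A⁻¹ *ᵥ v) = v := by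
        rw [Matrix.mulVec_mulVec, hAA, Matrix.one_mulVec]
      rw [← hA, Matrix.mulVec_sub, hAv]
      simp only [Pi.sub_apply, sub_nonneg]
      exact key x
  intro x
  refine le_trans (hQ x) (le_of_eq ?_)
  have : A⁻¹ *ᵥ v = (A⁻¹ *ᵥ r) - β • (A⁻¹ *ᵥ c) + f • (A⁻¹ *ᵥ εbar)
      + (1 - f) • (A⁻¹ *ᵥ εhat) := by
    have hveq : v = r - β • c + f • εbar + (1 - f) • εhat := by
      funext y; simp [hv, smul_eq_mul]
    rw [hveq, Matrix.mulVec_add, Matrix.mulVec_add, Matrix.mulVec_sub,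
      Matrix.mulVec_smul, Matrix.mulVec_smul, Matrix.mulVec_smul]
  rw [this]; simp [smul_eq_mul]
end

section
/- (Proposition 1: COMBO lower-bounds the expected value under the initial distribution for sufficiently large β.) Let X be a finite nonempty type and γ ∈ (0,1). Let P, P̄, P̂ : X → X → ℝ be row-stochastic matrices (true, empirical, and model dynamics composed with the policy), and r, r̄, r̂ : X → ℝ rewards. Fix f ∈ (0,1], a probability mass function μ : X → ℝ with μ(x) > 0 for all x, and a probability mass function d : X → ℝ with d(x) > 0 for all x. Set P_f := f·P̄ + (1−f)·P̂ and r_f := f·r̄ + (1−f)·r̂, define the occupancy ρ(x) := (1−γ)·Σ_y μ(y)·S_{P_f}(y,x), set d_f(x) := f·d(x) + (1−f)·ρ(x) and c(x) := (ρ(x) − d(x))/d_f(x). Assume ρ ≠ d. For each β ≥ 0, let Q̂_β := S_{P_f}·(r_f − β·c) (the unique fixed point of the β-penalized interpolated Bellman backup), and let Q^π := S_P·r. Then there exists β₀ ≥ 0 such that for all β ≥ β₀: Σ_x μ(x)·Q̂_β(x) ≤ Σ_x μ(x)·Q^π(x). -/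
open Matrix

attribute [local instance] Matrix.linftyOpNormedAddCommGroup Matrix.linftyOpNormedRing
  Matrix.linftyOpNormedSpace

section Aux

variable {X : Type*} [Fintype X] [Nonempty X] [DecidableEq X]

/-- evaluation of a matrix entry as a continuous linear map (linfty op norm) -/
noncomputable def entryCLM (i j : X) : Matrix X X ℝ →L[ℝ] ℝ :=
  LinearMap.mkContinuous
    { toFun := fun A => A i j
      map_add' := fun _ _ => rfl
      map_smul' := fun _ _ => rfl } 1
    (by
      intro A
      simp only [one_mul, LinearMap.coe_mk, AddHom.coe_mk]
      calc ‖A i j‖ ≤ ∑ k, ‖A i k‖ :=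
            Finset.single_le_sum (fun k _ => norm_nonneg _) (Finset.mem_univ j)
        _ ≤ ‖A‖ := by
            rw [Matrix.linfty_opNorm_def]
            have : ((∑ k, ‖A i k‖₊ : NNReal) : ℝ) ≤
                ((Finset.univ.sup fun i' => ∑ k, ‖A i' k‖₊ : NNReal) : ℝ) := by
              exact_mod_cast Finset.le_sup (f := fun i' => ∑ k, ‖A i' k‖₊)
                (Finset.mem_univ i)
            simpa [NNReal.coe_sum, coe_nnnorm] using this)

theorem stoch_aux (γ : ℝ) (hγ0 : 0 < γ) (hγ1 : γ < 1)
    (M : Matrix X X ℝ) (hM0 : ∀ x y, 0 ≤ M x y) (hM1 : ∀ x, ∑ y, M x y = 1) :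
    IsUnit (1 - γ • M) ∧ (∀ x y, 0 ≤ (1 - γ • M)⁻¹ x y) ∧
      (∀ x, ∑ y, (1 - γ • M)⁻¹ x y = (1 - γ)⁻¹) := by
  have hnorm : ‖γ • M‖ < 1 := by
    rw [Matrix.linfty_opNorm_def]
    have hrow : ∀ i, (∑ k, ‖(γ • M) i k‖₊ : NNReal) = Real.toNNReal γ := by
      intro i
      have : ∀ k, (‖(γ • M) i k‖₊ : NNReal) = Real.toNNReal (γ * M i k) := by
        intro k
        ext
        simp only [Matrix.smul_apply, smul_eq_mul, coe_nnnorm, Real.norm_eq_abs,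
          Real.coe_toNNReal _ (mul_nonneg hγ0.le (hM0 i k)),
          abs_of_nonneg (mul_nonneg hγ0.le (hM0 i k))]
      rw [Finset.sum_congr rfl fun k _ => this k]
      ext
      push_cast [Real.coe_toNNReal _ (mul_nonneg hγ0.le (hM0 _ _)),
        Real.coe_toNNReal _ hγ0.le]
      rw [← Finset.mul_sum, hM1 i, mul_one]
    have : (Finset.univ.sup fun i => ∑ k, ‖(γ • M) i k‖₊ : NNReal) = Real.toNNReal γ := by
      apply le_antisymm
      · exact Finset.sup_le fun i _ => (hrow i).le
      · obtain ⟨i⟩ := ‹Nonempty X›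
        exact (hrow i).ge.trans (Finset.le_sup (f := fun i => ∑ k, ‖(γ • M) i k‖₊)
          (Finset.mem_univ i))
    rw [this]
    simpa [Real.coe_toNNReal _ hγ0.le] using hγ1
  have hunit : IsUnit (1 - γ • M) := isUnit_one_sub_of_norm_lt_one hnorm
  refine ⟨hunit, ?_, ?_⟩
  · -- nonnegativity of inverse entries
    intro x y
    have hsum : HasSum (fun n : ℕ => (γ • M) ^ n) (Ring.inverse (1 - γ • M)) :=
      hasSum_geom_series_inverse _ hnorm
    have hentry : HasSum (fun n : ℕ => ((γ • M) ^ n) x y)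
        (Ring.inverse (1 - γ • M) x y) := by
      have := (entryCLM x y).hasSum hsum
      exact this
    have hnn : ∀ n : ℕ, 0 ≤ ((γ • M) ^ n) x y := by
      have key : ∀ n : ℕ, ∀ a b : X, 0 ≤ ((γ • M) ^ n) a b := by
        intro n
        induction n with
        | zero => intro a b; by_cases h : a = b <;>
            simp [pow_zero, Matrix.one_apply, h]
        | succ n ih =>
            intro a b
            rw [pow_succ, Matrix.mul_apply]
            exact Finset.sum_nonneg fun k _ =>
              mul_nonneg (ih a k) (mul_nonneg hγ0.le (hM0 k b))
      exact fun n => key n x y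
    have : 0 ≤ Ring.inverse (1 - γ • M) x y := hentry.nonneg hnn
    rwa [Matrix.nonsing_inv_eq_ringInverse]
  · -- row sums
    intro x
    have hdet : IsUnit (1 - γ • M).det := (Matrix.isUnit_iff_isUnit_det _).mp hunit
    have hmv : (1 - γ • M) *ᵥ (fun _ => (1 : ℝ)) = fun _ => (1 - γ) := by
      funext a
      simp [Matrix.mulVec, dotProduct, Matrix.sub_apply, Matrix.smul_apply,
        Finset.sum_sub_distrib, Matrix.one_apply, ← Finset.mul_sum, hM1 a]
    have h2 : (1 - γ • M)⁻¹ *ᵥ ((1 - γ • M) *ᵥ (fun _ => (1 : ℝ))) = fun _ => (1 : ℝ) := by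
      rw [Matrix.mulVec_mulVec, Matrix.nonsing_inv_mul _ hdet]
      funext a; simp [Matrix.one_mulVec]
    rw [hmv] at h2
    have h3 : (∑ y, (1 - γ • M)⁻¹ x y) * (1 - γ) = 1 := by
      have := congrFun h2 x
      simpa [Matrix.mulVec, dotProduct, ← Finset.sum_mul] using this
    have hγne : (1 - γ) ≠ 0 := by linarith
    field_simp at h3 ⊢
    linarith [h3]

end Aux

theorem combo_expected_lower_bound_large_beta {X : Type*}
    [Fintype X] [Nonempty X] [DecidableEq X]
    (γ : ℝ) (hγ0 : 0 < γ) (hγ1 : γ < 1)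
    (P Pbar Phat : Matrix X X ℝ)
    (hP0 : ∀ x y, 0 ≤ P x y) (hP1 : ∀ x, ∑ y, P x y = 1)
    (hPbar0 : ∀ x y, 0 ≤ Pbar x y) (hPbar1 : ∀ x, ∑ y, Pbar x y = 1)
    (hPhat0 : ∀ x y, 0 ≤ Phat x y) (hPhat1 : ∀ x, ∑ y, Phat x y = 1)
    (r rbar rhat : X → ℝ)
    (f : ℝ) (hf0 : 0 < f) (hf1 : f ≤ 1)
    (μ : X → ℝ) (hμ0 : ∀ x, 0 < μ x) (hμ1 : ∑ x, μ x = 1)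
    (d : X → ℝ) (hd0 : ∀ x, 0 < d x) (hd1 : ∑ x, d x = 1)
    (Pf : Matrix X X ℝ) (hPf : Pf = f • Pbar + (1 - f) • Phat)
    (rf : X → ℝ) (hrf : ∀ x, rf x = f * rbar x + (1 - f) * rhat x)
    (ρ : X → ℝ) (hρ : ∀ x, ρ x = (1 - γ) * ∑ y, μ y * (1 - γ • Pf)⁻¹ y x)
    (df : X → ℝ) (hdf : ∀ x, df x = f * d x + (1 - f) * ρ x)
    (c : X → ℝ) (hc : ∀ x, c x = (ρ x - d x) / df x)
    (hne : ρ ≠ d) :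
    ∃ β₀ : ℝ, 0 ≤ β₀ ∧ ∀ β ≥ β₀,
      (∑ x, μ x * ((1 - γ • Pf)⁻¹ *ᵥ fun y => rf y - β * c y) x) ≤
        ∑ x, μ x * ((1 - γ • P)⁻¹ *ᵥ r) x := by
  have hγne : (1 : ℝ) - γ ≠ 0 := by linarith
  have hγpos : (0 : ℝ) < 1 - γ := by linarith
  -- Pf is row-stochastic
  have hPf0 : ∀ x y, 0 ≤ Pf x y := by
    intro x y
    rw [hPf]
    simp only [Matrix.add_apply, Matrix.smul_apply, smul_eq_mul]
    have h1f : 0 ≤ 1 - f := by linarith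
    exact add_nonneg (mul_nonneg hf0.le (hPbar0 x y)) (mul_nonneg h1f (hPhat0 x y))
  have hPf1 : ∀ x, ∑ y, Pf x y = 1 := by
    intro x
    rw [hPf]
    simp only [Matrix.add_apply, Matrix.smul_apply, smul_eq_mul]
    rw [Finset.sum_add_distrib, ← Finset.mul_sum, ← Finset.mul_sum, hPbar1 x, hPhat1 x]
    ring
  obtain ⟨hu, hSnn, hSrow⟩ := stoch_aux γ hγ0 hγ1 Pf hPf0 hPf1
  set S := (1 - γ • Pf)⁻¹ with hS
  set A := ∑ x, μ x * (S *ᵥ rf) x with hA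
  set C := ∑ x, μ x * (S *ᵥ c) x with hCdef
  set B := ∑ x, μ x * ((1 - γ • P)⁻¹ *ᵥ r) x with hB
  -- expand the LHS as A - β * C
  have expand : ∀ β : ℝ, (∑ x, μ x * (S *ᵥ fun y => rf y - β * c y) x) = A - β * C := by
    intro β
    have h1 : ∀ x, (S *ᵥ fun y => rf y - β * c y) x = (S *ᵥ rf) x - β * (S *ᵥ c) x := by
      intro x
      simp only [Matrix.mulVec, dotProduct, Finset.mul_sum, ← Finset.sum_sub_distrib]
      exact Finset.sum_congr rfl fun y _ => by ring
    rw [hA, hCdef, Finset.mul_sum, ← Finset.sum_sub_distrib]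
    exact Finset.sum_congr rfl fun x _ => by rw [h1 x]; ring
  -- compute C
  have hρ' : ∀ y, ∑ x, μ x * S x y = (1 - γ)⁻¹ * ρ y := by
    intro y
    rw [hρ y]
    field_simp
  have hCeq : C = (1 - γ)⁻¹ * ∑ y, ρ y * c y := by
    rw [hCdef]
    calc ∑ x, μ x * (S *ᵥ c) x = ∑ x, ∑ y, μ x * S x y * c y := by
          refine Finset.sum_congr rfl fun x _ => ?_
          simp only [Matrix.mulVec, dotProduct, Finset.mul_sum]
          exact Finset.sum_congr rfl fun y _ => by ring
      _ = ∑ y, ∑ x, μ x * S x y * c y := Finset.sum_comm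
      _ = ∑ y, (∑ x, μ x * S x y) * c y := by
          refine Finset.sum_congr rfl fun y _ => ?_
          rw [Finset.sum_mul]
      _ = ∑ y, (1 - γ)⁻¹ * ρ y * c y := by
          refine Finset.sum_congr rfl fun y _ => ?_
          rw [hρ' y]
      _ = (1 - γ)⁻¹ * ∑ y, ρ y * c y := by
          rw [Finset.mul_sum]
          exact Finset.sum_congr rfl fun y _ => by ring
  -- ρ is nonnegative and sums to 1
  have hρnn : ∀ y, 0 ≤ ρ y := by
    intro y
    rw [hρ y]
    exact mul_nonneg hγpos.le (Finset.sum_nonneg fun x _ =>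
      mul_nonneg (hμ0 x).le (hSnn x y))
  have hsum_rho : ∑ x, ρ x = 1 := by
    have : ∑ x, ρ x = (1 - γ) * ∑ y, μ y * ∑ x, S y x := by
      simp only [hρ, ← Finset.mul_sum]
      congr 1
      rw [Finset.sum_comm]
      exact Finset.sum_congr rfl fun y _ => by rw [Finset.mul_sum]
    rw [this]
    have : ∑ y, μ y * ∑ x, S y x = ∑ y, μ y * (1 - γ)⁻¹ := by
      exact Finset.sum_congr rfl fun y _ => by rw [hSrow y]
    rw [this, ← Finset.sum_mul, hμ1]
    field_simp
  have hdfpos : ∀ y, 0 < df y := by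
    intro y
    rw [hdf y]
    have h1f : 0 ≤ 1 - f := by linarith
    have := mul_nonneg h1f (hρnn y)
    nlinarith [mul_pos hf0 (hd0 y)]
  -- key identity: ρ y * c y = (ρ y - d y) + f * (ρ y - d y)^2 / df y
  have hterm : ∀ y, ρ y * c y = (ρ y - d y) + f * (ρ y - d y) ^ 2 / df y := by
    intro y
    rw [hc y]
    have hdfne := (hdfpos y).ne'
    field_simp
    rw [hdf y]
    ring
  -- K := ∑ ρ c > 0
  have hK : 0 < ∑ y, ρ y * c y := by
    have h1 : ∑ y, ρ y * c y = ∑ y, ((ρ y - d y) + f * (ρ y - d y) ^ 2 / df y) :=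
      Finset.sum_congr rfl fun y _ => hterm y
    rw [h1, Finset.sum_add_distrib]
    have h2 : ∑ y, (ρ y - d y) = 0 := by
      rw [Finset.sum_sub_distrib, hsum_rho, hd1, sub_self]
    rw [h2, zero_add]
    obtain ⟨y0, hy0⟩ := Function.ne_iff.mp hne
    refine Finset.sum_pos' (fun y _ => ?_) ⟨y0, Finset.mem_univ y0, ?_⟩
    · exact div_nonneg (mul_nonneg hf0.le (sq_nonneg _)) (hdfpos y).le
    · apply div_pos _ (hdfpos y0)
      exact mul_pos hf0 (pow_two_pos_of_ne_zero (sub_ne_zero.mpr hy0))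
  have hC : 0 < C := by
    rw [hCeq]
    exact mul_pos (inv_pos.mpr hγpos) hK
  refine ⟨max 0 ((A - B) / C), le_max_left _ _, fun β hβ => ?_⟩
  rw [expand β]
  have h1 : (A - B) / C ≤ β := le_trans (le_max_right _ _) hβ
  rw [div_le_iff₀ hC] at h1
  nlinarith
end

section
/- (Proposition 2: COMBO is less conservative than CQL under condition (*).) Let S and A be finite nonempty types. Let π, π_β : S → A → ℝ be policies with π(a|s) ≥ 0, Σ_a π(a|s) = 1, π_β(a|s) > 0, and Σ_a π_β(a|s) = 1 for all s. Let d̄ : S → ℝ be a probability mass function with d̄(s) > 0 for all s (the dataset state distribution), let ρ_S : S → ℝ be a probability mass function (the model-rollout state distribution), let β ≥ 0, and let Q : S×A → ℝ be arbitrary. Define Q̂_COMBO(s,a) = Q(s,a) − β·(ρ_S(s)·π(a|s) − d̄(s)·π_β(a|s))/(d̄(s)·π_β(a|s)) and Q̂_CQL(s,a) = Q(s,a) − β·(π(a|s) − π_β(a|s))/π_β(a|s). If Σ_{s,a} ρ_S(s)·π(a|s)·(π(a|s)/π_β(a|s)) − Σ_{s,a} d̄(s)·π(a|s)·(π(a|s)/π_β(a|s))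 ≤ 0, then Σ_{s,a} d̄(s)·π(a|s)·Q̂_COMBO(s,a) ≥ Σ_{s,a} d̄(s)·π(a|s)·Q̂_CQL(s,a). -/
theorem combo_less_conservative_than_cql {S A : Type*}
    [Fintype S] [Fintype A] [Nonempty S] [Nonempty A]
    (π πβ : S → A → ℝ)
    (hπ0 : ∀ s a, 0 ≤ π s a) (hπ1 : ∀ s, ∑ a, π s a = 1)
    (hπβ0 : ∀ s a, 0 < πβ s a) (hπβ1 : ∀ s, ∑ a, πβ s a = 1)
    (dbar : S → ℝ) (hdbar0 : ∀ s, 0 < dbar s) (hdbar1 : ∑ s, dbar s = 1)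
    (ρS : S → ℝ) (hρS0 : ∀ s, 0 ≤ ρS s) (hρS1 : ∑ s, ρS s = 1)
    (β : ℝ) (hβ : 0 ≤ β) (Q : S × A → ℝ)
    (QCOMBO QCQL : S × A → ℝ)
    (hQCOMBO : ∀ s a, QCOMBO (s, a) =
      Q (s, a) - β * (ρS s * π s a - dbar s * πβ s a) / (dbar s * πβ s a))
    (hQCQL : ∀ s a, QCQL (s, a) = Q (s, a) - β * (π s a - πβ s a) / πβ s a)
    (hcond : (∑ s, ∑ a, ρS s * π s a * (π s a / πβ s a)) -
      (∑ s, ∑ a, dbar s * π s a * (π s a / πβ s a)) ≤ 0) :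
    (∑ s, ∑ a, dbar s * π s a * QCOMBO (s, a)) ≥
      ∑ s, ∑ a, dbar s * π s a * QCQL (s, a) := by
  have key : ∀ s a, dbar s * π s a * QCOMBO (s, a) =
      dbar s * π s a * QCQL (s, a) +
        β * (dbar s * π s a * (π s a / πβ s a) - ρS s * π s a * (π s a / πβ s a)) := by
    intro s a
    have h1 := (hπβ0 s a).ne'
    have h2 := (hdbar0 s).ne'
    rw [hQCOMBO, hQCQL]
    field_simp
    ring
  simp_rw [key, Finset.sum_add_distrib, ← Finset.mul_sum, Finset.sum_sub_distrib]
  nlinarith [hcond]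
end

section
/- (Lemma A.2: bound on the return in the f-interpolant MDP, matrix form.) Let X be a finite nonempty type, γ ∈ [0,1), and let P₁, P₂, P : X → X → ℝ be row-stochastic matrices, r₁, r₂, r : X → ℝ rewards with |r(x)| ≤ R_max for all x (R_max ≥ 0), f ∈ [0,1], and μ : X → ℝ a probability mass function. Define the f-interpolant P_f := f·P₁ + (1−f)·P₂ and r_f := f·r₁ + (1−f)·r₂; define the returns J(P', r') := Σ_x μ(x)·(S_{P'}·r')(x); let w(x) := (1−γ)·Σ_y μ(y)·S_{P_f}(y,x) be the discounted occupancy of the interpolant dynamics; let Q := S_P·r; and let D := (1/2)·max_x Σ_y |P₂(x,y) − P(x,y)|. Then |J(P_f, r_f) − J(P, r)| ≤ α, where α = 2·γ·(1−f)·R_max·D/(1−γ)² + (γ·f/(1−γ))·|Σ_x w(x)·Σ_y (P₁(x,y) − P(x,y))·Q(y)| + (f/(1−γ))·Σ_x w(x)·|r₁(x) − r(x)| + ((1−f)/(1−γ))·Σ_x w(x)·|r₂(x) − r(x)|. -/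
open Matrix Finset
set_option linter.unusedSectionVars false

section Helpers
variable {X : Type*} [Fintype X] [Nonempty X] [DecidableEq X]

lemma fib_row_bound {A : Matrix X X ℝ} (hA0 : ∀ x y, 0 ≤ A x y)
    (hA1 : ∀ x, ∑ y, A x y = 1) (v : X → ℝ) (K : ℝ) (hK : ∀ y, |v y| ≤ K) (x : X) :
    |∑ y, A x y * v y| ≤ K := by
  calc |∑ y, A x y * v y| ≤ ∑ y, |A x y * v y| := Finset.abs_sum_le_sum_abs _ _
    _ ≤ ∑ y, A x y * K := by
        apply Finset.sum_le_sum; intro y _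
        rw [abs_mul, abs_of_nonneg (hA0 x y)]
        exact mul_le_mul_of_nonneg_left (hK y) (hA0 x y)
    _ = K := by rw [← Finset.sum_mul, hA1, one_mul]

lemma fib_mulVec_apply (M : Matrix X X ℝ) (v : X → ℝ) (x : X) :
    (M *ᵥ v) x = ∑ y, M x y * v y := rfl

lemma fib_isUnit {γ : ℝ} (hγ0 : 0 ≤ γ) (hγ1 : γ < 1)
    {A : Matrix X X ℝ} (hA0 : ∀ x y, 0 ≤ A x y) (hA1 : ∀ x, ∑ y, A x y = 1) :
    IsUnit (1 - γ • A).det := by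
  rw [isUnit_iff_ne_zero]
  intro hdet
  obtain ⟨v, hv0, hv⟩ := (Matrix.exists_mulVec_eq_zero_iff).mpr hdet
  have hvx : ∀ x, v x = γ * ∑ y, A x y * v y := by
    intro x
    have h := congrFun hv x
    rw [Matrix.sub_mulVec, Matrix.one_mulVec, Matrix.smul_mulVec] at h
    have h' : v x - γ * (A *ᵥ v) x = 0 := h
    rw [fib_mulVec_apply] at h'
    linarith
  set K := Finset.univ.sup' Finset.univ_nonempty (fun x => |v x|) with hKdef
  have hK : ∀ y, |v y| ≤ K := fun y => Finset.le_sup' (fun x => |v x|) (Finset.mem_univ y)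
  obtain ⟨x₀, -, hx₀⟩ := Finset.exists_mem_eq_sup' Finset.univ_nonempty (fun x => |v x|)
  have h1 : K ≤ γ * K := by
    calc K = |v x₀| := hKdef.trans hx₀
      _ = γ * |∑ y, A x₀ y * v y| := by rw [hvx x₀, abs_mul, abs_of_nonneg hγ0]
      _ ≤ γ * K := mul_le_mul_of_nonneg_left (fib_row_bound hA0 hA1 v K hK x₀) hγ0
  have hK0 : 0 ≤ K := le_trans (abs_nonneg _) (hK (Classical.arbitrary X))
  have hKneg : K ≤ 0 := by nlinarith
  apply hv0
  funext x
  simpa using abs_nonpos_iff.mp ((hK x).trans hKneg)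

lemma fib_nonneg_of_mulVec {γ : ℝ} (hγ0 : 0 ≤ γ) (hγ1 : γ < 1)
    {A : Matrix X X ℝ} (hA0 : ∀ x y, 0 ≤ A x y) (hA1 : ∀ x, ∑ y, A x y = 1)
    {u v : X → ℝ} (huv : (1 - γ • A) *ᵥ u = v) (hv : ∀ x, 0 ≤ v x) (x : X) : 0 ≤ u x := by
  obtain ⟨x₀, -, hx₀⟩ := Finset.exists_mem_eq_inf' (Finset.univ_nonempty (α := X)) u
  set m := Finset.univ.inf' Finset.univ_nonempty u with hm
  have hmle : ∀ y, m ≤ u y := fun y => Finset.inf'_le _ (Finset.mem_univ y)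
  have hvx : v x₀ = u x₀ - γ * ∑ y, A x₀ y * u y := by
    have h := congrFun huv x₀
    rw [Matrix.sub_mulVec, Matrix.one_mulVec, Matrix.smul_mulVec] at h
    have h' : u x₀ - γ * (A *ᵥ u) x₀ = v x₀ := h
    rw [fib_mulVec_apply] at h'
    linarith
  have hsum : m ≤ ∑ y, A x₀ y * u y := by
    calc m = ∑ y, A x₀ y * m := by rw [← Finset.sum_mul, hA1, one_mul]
      _ ≤ ∑ y, A x₀ y * u y :=
        Finset.sum_le_sum fun y _ => mul_le_mul_of_nonneg_left (hmle y) (hA0 x₀ y)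
  have h0 : 0 ≤ v x₀ := hv x₀
  have hm0 : 0 ≤ m := by nlinarith [hvx, hx₀]
  exact le_trans hm0 (hmle x)

lemma fib_inv_nonneg {γ : ℝ} (hγ0 : 0 ≤ γ) (hγ1 : γ < 1)
    {A : Matrix X X ℝ} (hA0 : ∀ x y, 0 ≤ A x y) (hA1 : ∀ x, ∑ y, A x y = 1)
    (x y : X) : 0 ≤ (1 - γ • A)⁻¹ x y := by
  have hu := fib_isUnit hγ0 hγ1 hA0 hA1
  have key : (1 - γ • A) *ᵥ ((1 - γ • A)⁻¹ *ᵥ Pi.single y 1) = Pi.single y 1 := by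
    rw [Matrix.mulVec_mulVec, Matrix.mul_nonsing_inv _ hu, Matrix.one_mulVec]
  have := fib_nonneg_of_mulVec hγ0 hγ1 hA0 hA1 key
    (fun z => by by_cases h : z = y <;> simp [h, Pi.single_apply]) x
  simpa [fib_mulVec_apply, Pi.single_apply] using this

lemma fib_inv_rowsum {γ : ℝ} (hγ0 : 0 ≤ γ) (hγ1 : γ < 1)
    {A : Matrix X X ℝ} (hA0 : ∀ x y, 0 ≤ A x y) (hA1 : ∀ x, ∑ y, A x y = 1)
    (x : X) : ∑ y, (1 - γ • A)⁻¹ x y = (1 - γ)⁻¹ := by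
  have hu := fib_isUnit hγ0 hγ1 hA0 hA1
  have hne : (1 : ℝ) - γ ≠ 0 := by linarith
  have h1 : (1 - γ • A) *ᵥ (fun _ => (1 - γ)⁻¹) = fun _ => 1 := by
    funext z
    rw [Matrix.sub_mulVec, Matrix.one_mulVec, Matrix.smul_mulVec]
    show (1 - γ)⁻¹ - γ * (A *ᵥ fun _ => (1 - γ)⁻¹) z = 1
    rw [fib_mulVec_apply]
    simp only [← Finset.sum_mul, hA1, one_mul]
    field_simp
  have h2 : (1 - γ • A)⁻¹ *ᵥ (fun _ => (1:ℝ)) = fun _ => (1 - γ)⁻¹ := by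
    rw [← h1, Matrix.mulVec_mulVec, Matrix.nonsing_inv_mul _ hu, Matrix.one_mulVec]
  have := congrFun h2 x
  rw [fib_mulVec_apply] at this
  simpa using this

end Helpers

section Helpers2
variable {X : Type*} [Fintype X] [Nonempty X] [DecidableEq X]

lemma fib_Q_bound {γ : ℝ} (hγ0 : 0 ≤ γ) (hγ1 : γ < 1)
    {A : Matrix X X ℝ} (hA0 : ∀ x y, 0 ≤ A x y) (hA1 : ∀ x, ∑ y, A x y = 1)
    {r : X → ℝ} {Rmax : ℝ} (hr : ∀ x, |r x| ≤ Rmax)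
    (z : X) : |((1 - γ • A)⁻¹ *ᵥ r) z| ≤ Rmax * (1 - γ)⁻¹ := by
  have hne : (0:ℝ) < 1 - γ := by linarith
  set Q := (1 - γ • A)⁻¹ *ᵥ r with hQdef
  have hu := fib_isUnit hγ0 hγ1 hA0 hA1
  have hMQ : (1 - γ • A) *ᵥ Q = r := by
    rw [hQdef, Matrix.mulVec_mulVec, Matrix.mul_nonsing_inv _ hu, Matrix.one_mulVec]
  have hcomp : ∀ x, Q x = r x + γ * ∑ y, A x y * Q y := by
    intro x
    have h := congrFun hMQ x
    rw [Matrix.sub_mulVec, Matrix.one_mulVec, Matrix.smul_mulVec] at h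
    have h' : Q x - γ * (A *ᵥ Q) x = r x := h
    rw [fib_mulVec_apply] at h'
    linarith
  set K := Finset.univ.sup' Finset.univ_nonempty (fun x => |Q x|) with hKdef
  have hK : ∀ y, |Q y| ≤ K := fun y => Finset.le_sup' (fun x => |Q x|) (Finset.mem_univ y)
  obtain ⟨x₀, -, hx₀⟩ := Finset.exists_mem_eq_sup' Finset.univ_nonempty (fun x => |Q x|)
  have h1 : K ≤ Rmax + γ * K := by
    calc K = |Q x₀| := hKdef.trans hx₀
      _ ≤ |r x₀| + γ * |∑ y, A x₀ y * Q y| := by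
          rw [hcomp x₀]
          refine (abs_add_le _ _).trans (add_le_add_right ?_ _)
          rw [abs_mul, abs_of_nonneg hγ0]
      _ ≤ Rmax + γ * K :=
          add_le_add (hr x₀)
            (mul_le_mul_of_nonneg_left (fib_row_bound hA0 hA1 Q K hK x₀) hγ0)
  have h2 : K ≤ Rmax * (1 - γ)⁻¹ := by
    rw [← div_eq_mul_inv, le_div_iff₀ hne]; nlinarith
  exact (hK z).trans h2

end Helpers2
theorem f_interpolant_return_bound {X : Type*}
    [Fintype X] [Nonempty X] [DecidableEq X]
    (γ : ℝ) (hγ0 : 0 ≤ γ) (hγ1 : γ < 1)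
    (P₁ P₂ P : Matrix X X ℝ)
    (hP₁0 : ∀ x y, 0 ≤ P₁ x y) (hP₁1 : ∀ x, ∑ y, P₁ x y = 1)
    (hP₂0 : ∀ x y, 0 ≤ P₂ x y) (hP₂1 : ∀ x, ∑ y, P₂ x y = 1)
    (hP0 : ∀ x y, 0 ≤ P x y) (hP1 : ∀ x, ∑ y, P x y = 1)
    (r₁ r₂ r : X → ℝ) (Rmax : ℝ) (hR : 0 ≤ Rmax) (hr : ∀ x, |r x| ≤ Rmax)
    (f : ℝ) (hf0 : 0 ≤ f) (hf1 : f ≤ 1)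
    (μ : X → ℝ) (hμ0 : ∀ x, 0 ≤ μ x) (hμ1 : ∑ x, μ x = 1)
    (Pf : Matrix X X ℝ) (hPf : Pf = f • P₁ + (1 - f) • P₂)
    (rf : X → ℝ) (hrf : ∀ x, rf x = f * r₁ x + (1 - f) * r₂ x)
    (w : X → ℝ) (hw : ∀ x, w x = (1 - γ) * ∑ y, μ y * (1 - γ • Pf)⁻¹ y x)
    (Q : X → ℝ) (hQ : Q = (1 - γ • P)⁻¹ *ᵥ r)
    (D : ℝ) (hD : D = (1 / 2) * Finset.univ.sup' Finset.univ_nonempty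
      fun x => ∑ y, |P₂ x y - P x y|) :
    |(∑ x, μ x * ((1 - γ • Pf)⁻¹ *ᵥ rf) x) - ∑ x, μ x * ((1 - γ • P)⁻¹ *ᵥ r) x| ≤
      2 * γ * (1 - f) * Rmax * D / (1 - γ) ^ 2 +
        (γ * f / (1 - γ)) * |∑ x, w x * ∑ y, (P₁ x y - P x y) * Q y| +
        (f / (1 - γ)) * (∑ x, w x * |r₁ x - r x|) +
        ((1 - f) / (1 - γ)) * ∑ x, w x * |r₂ x - r x| := by
  have hne : (0:ℝ) < 1 - γ := by linarith
  have hf1' : (0:ℝ) ≤ 1 - f := by linarith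
  have hPf0 : ∀ x y, 0 ≤ Pf x y := by
    intro x y
    rw [hPf]
    simp only [Matrix.add_apply, Matrix.smul_apply, smul_eq_mul]
    have h1 := hP₁0 x y; have h2 := hP₂0 x y
    nlinarith
  have hPf1 : ∀ x, ∑ y, Pf x y = 1 := by
    intro x
    rw [hPf]
    simp only [Matrix.add_apply, Matrix.smul_apply, smul_eq_mul]
    rw [Finset.sum_add_distrib, ← Finset.mul_sum, ← Finset.mul_sum, hP₁1, hP₂1]
    ring
  set S1 := (1 - γ • Pf)⁻¹ with hS1
  set S2 := (1 - γ • P)⁻¹ with hS2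
  have huf := fib_isUnit hγ0 hγ1 hPf0 hPf1
  have hu := fib_isUnit hγ0 hγ1 hP0 hP1
  have hQb : ∀ z, |Q z| ≤ Rmax * (1 - γ)⁻¹ := by
    intro z; rw [hQ]; exact fib_Q_bound hγ0 hγ1 hP0 hP1 hr z
  have hw0 : ∀ x, 0 ≤ w x := by
    intro x
    rw [hw x]
    exact mul_nonneg (by linarith) (Finset.sum_nonneg fun y _ =>
      mul_nonneg (hμ0 y) (fib_inv_nonneg hγ0 hγ1 hPf0 hPf1 y x))
  have hwsum : ∑ x, w x = 1 := by
    have h1 : ∑ x, w x = (1 - γ) * ∑ y, μ y * ∑ x, S1 y x := by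
      simp only [hw]
      rw [← Finset.mul_sum]
      congr 1
      rw [Finset.sum_comm]
      exact Finset.sum_congr rfl fun y _ => (Finset.mul_sum _ _ _).symm
    rw [h1]
    have h2 : ∀ y : X, ∑ x, S1 y x = (1 - γ)⁻¹ :=
      fun y => fib_inv_rowsum hγ0 hγ1 hPf0 hPf1 y
    simp only [h2]
    rw [← Finset.sum_mul, hμ1, one_mul, mul_inv_cancel₀ hne.ne']
  -- r in terms of Q
  have hMQ : (1 - γ • P) *ᵥ Q = r := by
    rw [hQ, Matrix.mulVec_mulVec, Matrix.mul_nonsing_inv _ hu, Matrix.one_mulVec]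
  have hrQ : ∀ y, r y = Q y - γ * ∑ z, P y z * Q z := by
    intro y
    have h := congrFun hMQ y
    rw [Matrix.sub_mulVec, Matrix.one_mulVec, Matrix.smul_mulVec] at h
    have h' : Q y - γ * (P *ᵥ Q) y = r y := h
    rw [fib_mulVec_apply] at h'
    linarith
  set T₁ : X → ℝ := fun y => ∑ z, (P₁ y z - P y z) * Q z with hT₁
  set T₂ : X → ℝ := fun y => ∑ z, (P₂ y z - P y z) * Q z with hT₂
  set g : X → ℝ := fun y => f * (r₁ y - r y) + (1 - f) * (r₂ y - r y)
      + γ * f * T₁ y + γ * (1 - f) * T₂ y with hg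
  have hgQ : g = rf - (1 - γ • Pf) *ᵥ Q := by
    funext y
    have hPfQ : ((1 - γ • Pf) *ᵥ Q) y = Q y - γ * ∑ z, Pf y z * Q z := by
      rw [Matrix.sub_mulVec, Matrix.one_mulVec, Matrix.smul_mulVec]
      show Q y - γ * (Pf *ᵥ Q) y = _
      rw [fib_mulVec_apply]
    have hPfsum : ∑ z, Pf y z * Q z
        = f * (∑ z, P₁ y z * Q z) + (1 - f) * ∑ z, P₂ y z * Q z := by
      rw [hPf]
      simp only [Matrix.add_apply, Matrix.smul_apply, smul_eq_mul, add_mul,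
        Finset.sum_add_distrib, Finset.mul_sum, mul_assoc]
    have hT₁' : T₁ y = (∑ z, P₁ y z * Q z) - ∑ z, P y z * Q z := by
      rw [hT₁]
      simp only [sub_mul, Finset.sum_sub_distrib]
    have hT₂' : T₂ y = (∑ z, P₂ y z * Q z) - ∑ z, P y z * Q z := by
      rw [hT₂]
      simp only [sub_mul, Finset.sum_sub_distrib]
    show g y = rf y - ((1 - γ • Pf) *ᵥ Q) y
    rw [hPfQ, hPfsum, hrf y]
    simp only [hg]
    rw [hT₁', hT₂', hrQ y]
    ring
  have hkey : S1 *ᵥ rf - S2 *ᵥ r = S1 *ᵥ g := by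
    rw [hgQ, Matrix.mulVec_sub, hS1, Matrix.mulVec_mulVec,
      Matrix.nonsing_inv_mul _ huf, Matrix.one_mulVec, hQ]
  set c := (1 - γ)⁻¹ with hc
  have hwc : ∀ y, ∑ x, μ x * S1 x y = c * w y := by
    intro y
    rw [hw y, hc, ← mul_assoc, inv_mul_cancel₀ hne.ne', one_mul]
  set A := ∑ y, w y * (r₁ y - r y) with hA
  set B := ∑ y, w y * (r₂ y - r y) with hB
  set C := ∑ y, w y * T₁ y with hC
  set E := ∑ y, w y * T₂ y with hE
  have hmain : (∑ x, μ x * (S1 *ᵥ rf) x) - ∑ x, μ x * (S2 *ᵥ r) x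
      = c * f * A + c * (1 - f) * B + c * (γ * f) * C + c * (γ * (1 - f)) * E := by
    rw [← Finset.sum_sub_distrib]
    have h1 : ∀ x, μ x * (S1 *ᵥ rf) x - μ x * (S2 *ᵥ r) x = μ x * (S1 *ᵥ g) x := by
      intro x
      rw [← mul_sub]
      congr 1
      have := congrFun hkey x
      simpa using this
    rw [Finset.sum_congr rfl fun x _ => h1 x]
    have h2 : ∑ x, μ x * (S1 *ᵥ g) x = ∑ y, (c * w y) * g y := by
      simp only [fib_mulVec_apply, Finset.mul_sum]
      rw [Finset.sum_comm]
      refine Finset.sum_congr rfl fun y _ => ?_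
      rw [← hwc y, Finset.sum_mul]
      exact Finset.sum_congr rfl fun x _ => by ring
    rw [h2, hA, hB, hC, hE, Finset.mul_sum, Finset.mul_sum, Finset.mul_sum, Finset.mul_sum,
      ← Finset.sum_add_distrib, ← Finset.sum_add_distrib, ← Finset.sum_add_distrib]
    refine Finset.sum_congr rfl fun y _ => ?_
    simp only [hg]
    ring
  have hc0 : 0 ≤ c := le_of_lt (by positivity)
  -- bounds
  have habs : ∀ (v : X → ℝ), |∑ y, w y * v y| ≤ ∑ y, w y * |v y| := by
    intro v
    refine (Finset.abs_sum_le_sum_abs _ _).trans (le_of_eq ?_)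
    exact Finset.sum_congr rfl fun y _ => by rw [abs_mul, abs_of_nonneg (hw0 y)]
  have h2D : ∀ y, ∑ z, |P₂ y z - P y z| ≤ 2 * D := by
    intro y
    rw [hD]
    have := Finset.le_sup' (fun x => ∑ z, |P₂ x z - P x z|)
      (Finset.mem_univ y)
    linarith
  have hT₂b : ∀ y, |T₂ y| ≤ 2 * D * (Rmax * c) := by
    intro y
    rw [hT₂]
    calc |∑ z, (P₂ y z - P y z) * Q z| ≤ ∑ z, |(P₂ y z - P y z) * Q z| :=
          Finset.abs_sum_le_sum_abs _ _
      _ ≤ ∑ z, |P₂ y z - P y z| * (Rmax * c) := by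
          refine Finset.sum_le_sum fun z _ => ?_
          rw [abs_mul]
          exact mul_le_mul_of_nonneg_left (hQb z) (abs_nonneg _)
      _ = (∑ z, |P₂ y z - P y z|) * (Rmax * c) := by rw [Finset.sum_mul]
      _ ≤ 2 * D * (Rmax * c) := by
          refine mul_le_mul_of_nonneg_right (h2D y) (by positivity)
  have hEb : |E| ≤ 2 * D * (Rmax * c) := by
    refine (habs _).trans ?_
    calc ∑ y, w y * |T₂ y| ≤ ∑ y, w y * (2 * D * (Rmax * c)) :=
          Finset.sum_le_sum fun y _ => mul_le_mul_of_nonneg_left (hT₂b y) (hw0 y)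
      _ = 2 * D * (Rmax * c) := by rw [← Finset.sum_mul, hwsum, one_mul]
  have hAb : |A| ≤ ∑ y, w y * |r₁ y - r y| := habs _
  have hBb : |B| ≤ ∑ y, w y * |r₂ y - r y| := habs _
  rw [hmain]
  have htri : |c * f * A + c * (1 - f) * B + c * (γ * f) * C + c * (γ * (1 - f)) * E|
      ≤ c * f * |A| + c * (1 - f) * |B| + c * (γ * f) * |C| + c * (γ * (1 - f)) * |E| := by
    calc |c * f * A + c * (1 - f) * B + c * (γ * f) * C + c * (γ * (1 - f)) * E|
        ≤ |c * f * A + c * (1 - f) * B + c * (γ * f) * C| + |c * (γ * (1 - f)) * E| :=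
          abs_add_le _ _
      _ ≤ |c * f * A + c * (1 - f) * B| + |c * (γ * f) * C| + |c * (γ * (1 - f)) * E| :=
          add_le_add_left (abs_add_le _ _) _
      _ ≤ |c * f * A| + |c * (1 - f) * B| + |c * (γ * f) * C| + |c * (γ * (1 - f)) * E| :=
          add_le_add_left (add_le_add_left (abs_add_le _ _) _) _
      _ = c * f * |A| + c * (1 - f) * |B| + c * (γ * f) * |C| + c * (γ * (1 - f)) * |E| := by
          simp only [abs_mul, abs_of_nonneg hc0, abs_of_nonneg hf0,
            abs_of_nonneg hf1', abs_of_nonneg hγ0]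
  refine htri.trans ?_
  have e1 : c * (γ * (1 - f)) * |E| ≤ 2 * γ * (1 - f) * Rmax * D / (1 - γ) ^ 2 := by
    have := mul_le_mul_of_nonneg_left hEb (mul_nonneg hc0 (mul_nonneg hγ0 hf1'))
    refine this.trans (le_of_eq ?_)
    rw [hc]
    have hD0 : 0 ≤ D := by
      rw [hD]
      have := (Finset.abs_sum_le_sum_abs (fun z => P₂ (Classical.arbitrary X) z
        - P (Classical.arbitrary X) z) Finset.univ)
      have hle := Finset.le_sup' (fun x => ∑ z, |P₂ x z - P x z|)
        (Finset.mem_univ (Classical.arbitrary X))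
      have hnn : (0:ℝ) ≤ ∑ z, |P₂ (Classical.arbitrary X) z - P (Classical.arbitrary X) z| :=
        Finset.sum_nonneg fun z _ => abs_nonneg _
      nlinarith
    field_simp
  have e2 : c * (γ * f) * |C| = (γ * f / (1 - γ)) * |C| := by
    rw [hc]; field_simp
  have e3 : c * f * |A| ≤ (f / (1 - γ)) * ∑ y, w y * |r₁ y - r y| := by
    rw [hc, div_eq_mul_inv, mul_comm f (1-γ)⁻¹]
    exact mul_le_mul_of_nonneg_left hAb (mul_nonneg hc0 hf0)
  have e4 : c * (1 - f) * |B| ≤ ((1 - f) / (1 - γ)) * ∑ y, w y * |r₂ y - r y| := by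
    rw [hc, div_eq_mul_inv, mul_comm (1-f) (1-γ)⁻¹]
    exact mul_le_mul_of_nonneg_left hBb (mul_nonneg hc0 hf1')
  linarith
end
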